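/- Let V be a finite type, let G be a simple graph on V, and let w be a nonnegative real-valued weight function on the edges of G. Let M be a matching of G (a set of edges of G, no two of which share a vertex) with the property that every edge e of G shares an endpoint with some edge f ∈ M satisfying w(f) ≥ w(e). Then for every matching M' of G, ∑_{e ∈ M'} w(e) ≤ 2·∑_{f ∈ M} w(f). -/

import Mathlib

/-- A maximal-type matching `M` in which every edge of the graph is blocked by
an incident matching edge of at least equal weight has total weight at least
half the weight of any matching `M'`. -/
theorem greedy_matching_half_approx {V : Type*} [Fintype V] [DecidableEq V]
    (G : SimpleGraph V) [DecidableRel G.Adj]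
    (w : Sym2 V → ℝ) (hw : ∀ e ∈ G.edgeFinset, 0 ≤ w e)
    (M : Finset (Sym2 V)) (hM : M ⊆ G.edgeFinset)
    (hMmatch : ∀ e ∈ M, ∀ f ∈ M, e ≠ f → ∀ v : V, v ∈ e → v ∉ f)
    (hblock : ∀ e ∈ G.edgeFinset, ∃ f ∈ M, (∃ v : V, v ∈ e ∧ v ∈ f) ∧ w e ≤ w f)
    (M' : Finset (Sym2 V)) (hM' : M' ⊆ G.edgeFinset)
    (hM'match : ∀ e ∈ M', ∀ f ∈ M', e ≠ f → ∀ v : V, v ∈ e → v ∉ f) :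
    ∑ e ∈ M', w e ≤ 2 * ∑ f ∈ M, w f := by
  classical
  choose b hbM hshare hble using hblock
  choose vx hvx1 hvx2 using hshare
  set B : Sym2 V → Sym2 V := fun e =>
    if h : e ∈ G.edgeFinset then b e h else e with hB
  set VX : Sym2 V → V := fun e =>
    if h : e ∈ G.edgeFinset then vx e h else (Quot.out e).1 with hVX
  have hBM : ∀ e ∈ M', B e ∈ M := by
    intro e he
    simp only [hB, hM' he, dif_pos]
    exact hbM e (hM' he)
  have hVXe : ∀ e ∈ M', VX e ∈ e := by
    intro e he
    simp only [hVX, hM' he, dif_pos]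
    exact hvx1 e (hM' he)
  have hVXB : ∀ e ∈ M', VX e ∈ B e := by
    intro e he
    simp only [hVX, hB, hM' he, dif_pos]
    exact hvx2 e (hM' he)
  have hwle : ∀ e ∈ M', w e ≤ w (B e) := by
    intro e he
    simp only [hB, hM' he, dif_pos]
    exact hble e (hM' he)
  calc ∑ e ∈ M', w e ≤ ∑ e ∈ M', w (B e) := Finset.sum_le_sum hwle
    _ = ∑ f ∈ M, ∑ e ∈ M'.filter (fun e => B e = f), w (B e) :=
        (Finset.sum_fiberwise_of_maps_to hBM _).symm
    _ ≤ ∑ f ∈ M, 2 * w f := by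
        apply Finset.sum_le_sum
        intro f hf
        have hwf : 0 ≤ w f := hw f (hM hf)
        have hsum : ∑ e ∈ M'.filter (fun e => B e = f), w (B e)
            = (M'.filter (fun e => B e = f)).card * w f := by
          rw [Finset.sum_congr rfl (fun e he => by
            rw [(Finset.mem_filter.mp he).2])]
          simp [Finset.sum_const, nsmul_eq_mul]
        rw [hsum]
        have hcard : (M'.filter (fun e => B e = f)).card ≤ 2 := by
          obtain ⟨x, y⟩ := f
          have : (M'.filter (fun e => B e = s(x, y))).card ≤ ({x, y} : Finset V).card := by
            apply Finset.card_le_card_of_injOn VX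
            · intro e he
              obtain ⟨he', hbe⟩ := Finset.mem_filter.mp he
              have := hVXB e he'
              rw [hbe] at this
              rcases Sym2.mem_iff.mp this with h | h <;> simp [h]
            · intro e1 h1 e2 h2 heq
              by_contra hne
              exact hM'match e1 (Finset.mem_filter.mp h1).1 e2 (Finset.mem_filter.mp h2).1 hne
                (VX e1) (hVXe e1 (Finset.mem_filter.mp h1).1)
                (heq ▸ hVXe e2 (Finset.mem_filter.mp h2).1)
          calc _ ≤ ({x, y} : Finset V).card := this
            _ ≤ 2 := Finset.card_insert_le _ _ |>.trans (by simp)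
        have h2 : ((M'.filter (fun e => B e = f)).card : ℝ) ≤ 2 := by exact_mod_cast hcard
        exact mul_le_mul_of_nonneg_right h2 hwf
    _ = 2 * ∑ f ∈ M, w f := (Finset.mul_sum _ _ _).symm
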